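/- arXiv:0902.1407 — 3 statements merged into one kernel-verified Lean document; each statement's English description precedes it below -/
import Mathlib

section
/- Let f : [0, ∞) → ℝ be lower semicontinuous and let D ⊆ (0, ∞) be a countable dense subset. Assume that for every t ∈ D one has f(t) ≤ f(0) and f(t) ≤ f(s) for Lebesgue-almost every s ∈ (0, t). Then f(t) ≤ f(0) for every t ≥ 0, and there exists a Lebesgue-null set N ⊆ (0, ∞) such that for every s ∈ (0, ∞) \ N and every t ≥ s one has f(t) ≤ f(s). -/
open MeasureTheory

/-- If a lower semicontinuous function `f : [0, ∞) → ℝ` satisfies, at each time `t` in a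
countable dense subset `D` of `(0, ∞)`, the inequality `f t ≤ f 0` together with
`f t ≤ f s` for Lebesgue-a.e. `s ∈ (0, t)`, then `f t ≤ f 0` for all `t ≥ 0` and there is
a Lebesgue-null set `N ⊆ (0, ∞)` such that `f t ≤ f s` for all `s ∈ (0, ∞) \ N` and all
`t ≥ s`. -/
theorem energy_ineq_upgrade (f : ℝ → ℝ)
    (hf : LowerSemicontinuousOn f (Set.Ici (0 : ℝ)))
    (D : Set ℝ) (hD_count : D.Countable) (hD_sub : D ⊆ Set.Ioi (0 : ℝ))
    (hD_dense : Set.Ioi (0 : ℝ) ⊆ closure D)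
    (hineq : ∀ t ∈ D, f t ≤ f 0 ∧
      ∀ᵐ s ∂(volume.restrict (Set.Ioo (0 : ℝ) t)), f t ≤ f s) :
    (∀ t ≥ (0 : ℝ), f t ≤ f 0) ∧
    ∃ N : Set ℝ, N ⊆ Set.Ioi (0 : ℝ) ∧ volume N = 0 ∧
      ∀ s ∈ Set.Ioi (0 : ℝ) \ N, ∀ t ≥ s, f t ≤ f s := by
  have key : ∀ c : ℝ, ∀ t : ℝ, 0 < t → c < f t → ∀ᶠ x in nhds t, c < f x := by
    intro c t ht hc
    have h := hf t (le_of_lt ht) c hc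
    rwa [nhdsWithin_eq_nhds.mpr (Ici_mem_nhds ht)] at h
  constructor
  · intro t ht
    rcases eq_or_lt_of_le ht with h0 | h0
    · simp [← h0]
    by_contra h
    push_neg at h
    have hev : {x | f 0 < f x} ∈ nhds t := key (f 0) t h0 h
    obtain ⟨d, hd1, hd2⟩ := mem_closure_iff_nhds.mp (hD_dense h0) _ hev
    exact absurd ((hineq d hd2).1) (not_le.mpr hd1)
  · refine ⟨⋃ t ∈ D, {s ∈ Set.Ioo 0 t | ¬ f t ≤ f s}, ?_, ?_, ?_⟩
    · intro s hs
      simp only [Set.mem_iUnion, Set.mem_setOf_eq] at hs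
      obtain ⟨t, _, ⟨hs0, _⟩, _⟩ := hs
      exact hs0
    · rw [measure_biUnion_null_iff hD_count]
      intro t ht
      have h2 := (hineq t ht).2
      have h3 : volume.restrict (Set.Ioo (0:ℝ) t) {s | ¬ f t ≤ f s} = 0 := h2
      rw [Measure.restrict_apply' measurableSet_Ioo] at h3
      have : {s ∈ Set.Ioo 0 t | ¬ f t ≤ f s} = {s | ¬ f t ≤ f s} ∩ Set.Ioo 0 t := by
        ext x; simp [Set.mem_setOf_eq, and_comm]
      rw [this]; exact h3
    · rintro s ⟨hs0, hsN⟩ t hts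
      rcases eq_or_lt_of_le hts with h0 | h0
      · simp [← h0]
      by_contra h
      push_neg at h
      have hev : {x | f s < f x} ∩ Set.Ioi s ∈ nhds t :=
        Filter.inter_mem (key (f s) t (lt_trans (Set.mem_Ioi.mp hs0) h0) h)
          (Ioi_mem_nhds h0)
      have htD : t ∈ closure D := hD_dense (lt_trans (Set.mem_Ioi.mp hs0) h0)
      obtain ⟨d, ⟨hd1, hd2⟩, hdD⟩ := mem_closure_iff_nhds.mp htD _ hev
      have hsd : f d ≤ f s := by
        by_contra hcon
        exact hsN (Set.mem_iUnion₂.mpr ⟨d, hdD, ⟨Set.mem_Ioi.mp hs0, hd2⟩, hcon⟩)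
      exact absurd hd1 (not_lt.mpr hsd)
end

section
/- Let (Ω, 𝓕) be a measurable space and let E : [0, ∞) × Ω → ℝ be measurable with respect to the product of the Borel σ-algebra on [0, ∞) and 𝓕, and suppose that for every ω ∈ Ω the map t ↦ E(t, ω) is lower semicontinuous. Let J ⊆ (0, ∞) be a countable dense subset. Then the set A = {ω ∈ Ω : E(t, ω) ≤ E(0, ω) for all t ≥ 0, and for Lebesgue-almost every s > 0 one has E(t, ω) ≤ E(s, ω) for all t ≥ s} satisfies A = ⋂_{t ∈ J} ( {ω : E(t, ω) ≤ E(0, ω)} ∩ {ω : E(t, ω) ≤ E(s, ω) for Lebesgue-almost every s ∈ (0, t)} ); in particular A ∈ 𝓕. -/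
open MeasureTheory Topology

/-- Key LSC lemma: if `E (t', ω) ≤ c` for all `t' ∈ J` with `s < t'`, and `0 ≤ s < t`,
then `E (t, ω) ≤ c`. -/
lemma key_lsc {Ω : Type*} (E : ℝ × Ω → ℝ) {ω : Ω}
    (hlsc : LowerSemicontinuousOn (fun t => E (t, ω)) (Set.Ici (0 : ℝ)))
    {J : Set ℝ} (hJ_sub : J ⊆ Set.Ioi (0 : ℝ)) (hJ_dense : Set.Ioi (0 : ℝ) ⊆ closure J)
    {s t c : ℝ} (hs : 0 ≤ s) (hst : s < t)
    (hb : ∀ t' ∈ J, s < t' → E (t', ω) ≤ c) : E (t, ω) ≤ c := by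
  by_contra hc
  push_neg at hc
  have ht0 : (0 : ℝ) < t := lt_of_le_of_lt hs hst
  have hclJ : t ∈ closure J := hJ_dense ht0
  have hNe : (𝓝[J ∩ Set.Ioi s] t).NeBot := by
    rw [mem_closure_iff_nhdsWithin_neBot] at hclJ
    have : 𝓝[J ∩ Set.Ioi s] t = 𝓝[J] t := by
      apply nhdsWithin_inter_of_mem'
      exact nhdsWithin_le_nhds ((isOpen_Ioi.mem_nhds hst))
    rw [this]; exact hclJ
  have hev : ∀ᶠ t' in 𝓝[Set.Ici (0:ℝ)] t, c < E (t', ω) :=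
    hlsc t (le_of_lt ht0) c hc
  have hmono : 𝓝[J ∩ Set.Ioi s] t ≤ 𝓝[Set.Ici (0:ℝ)] t := by
    apply nhdsWithin_mono
    intro x hx
    exact le_of_lt (Set.mem_Ioi.mp (hJ_sub hx.1))
  have hev' : ∀ᶠ t' in 𝓝[J ∩ Set.Ioi s] t, c < E (t', ω) := hmono hev
  have := hev'.and (eventually_mem_nhdsWithin)
  rcases this.exists with ⟨t', ht'c, ht'J, ht's⟩
  exact absurd (hb t' ht'J ht's) (not_le.mpr ht'c)

/-- For a jointly measurable energy functional `E` which is lower semicontinuous in time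
for every `ω`, the set `A` of paths satisfying the energy inequality for all pairs of
times (a.e. `s`, all `t ≥ s`, including `s = 0`) equals the countable intersection over a
countable dense set `J ⊆ (0, ∞)` of the sets `{E (t, ·) ≤ E (0, ·)} ∩ {E (t, ·) ≤ E (s, ·)
for a.e. s ∈ (0, t)}`; in particular `A` is measurable. -/
theorem energy_set_eq_iInter_and_measurable {Ω : Type*} [MeasurableSpace Ω]
    (E : ℝ × Ω → ℝ) (hE : Measurable E)
    (hlsc : ∀ ω : Ω, LowerSemicontinuousOn (fun t => E (t, ω)) (Set.Ici (0 : ℝ)))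
    (J : Set ℝ) (hJ_count : J.Countable) (hJ_sub : J ⊆ Set.Ioi (0 : ℝ))
    (hJ_dense : Set.Ioi (0 : ℝ) ⊆ closure J) :
    {ω : Ω | (∀ t ≥ (0 : ℝ), E (t, ω) ≤ E (0, ω)) ∧
        ∀ᵐ s ∂(volume.restrict (Set.Ioi (0 : ℝ))), ∀ t ≥ s, E (t, ω) ≤ E (s, ω)}
      = ⋂ t ∈ J, ({ω : Ω | E (t, ω) ≤ E (0, ω)} ∩
          {ω : Ω | ∀ᵐ s ∂(volume.restrict (Set.Ioo (0 : ℝ) t)), E (t, ω) ≤ E (s, ω)}) ∧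
    MeasurableSet
      {ω : Ω | (∀ t ≥ (0 : ℝ), E (t, ω) ≤ E (0, ω)) ∧
        ∀ᵐ s ∂(volume.restrict (Set.Ioi (0 : ℝ))), ∀ t ≥ s, E (t, ω) ≤ E (s, ω)} := by
  have hEΩ : ∀ t : ℝ, Measurable fun ω => E (t, ω) := fun t =>
    hE.comp (measurable_const.prodMk measurable_id)
  have hset : {ω : Ω | (∀ t ≥ (0 : ℝ), E (t, ω) ≤ E (0, ω)) ∧
        ∀ᵐ s ∂(volume.restrict (Set.Ioi (0 : ℝ))), ∀ t ≥ s, E (t, ω) ≤ E (s, ω)}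
      = ⋂ t ∈ J, ({ω : Ω | E (t, ω) ≤ E (0, ω)} ∩
          {ω : Ω | ∀ᵐ s ∂(volume.restrict (Set.Ioo (0 : ℝ) t)), E (t, ω) ≤ E (s, ω)}) := by
    ext ω
    simp only [Set.mem_setOf_eq, Set.mem_iInter, Set.mem_inter_iff]
    constructor
    · rintro ⟨h0, hae⟩ t ht
      refine ⟨h0 t (le_of_lt (hJ_sub ht)), ?_⟩
      rw [ae_restrict_iff' measurableSet_Ioo]
      rw [ae_restrict_iff' measurableSet_Ioi] at hae
      filter_upwards [hae] with s hs hs'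
      exact hs hs'.1 t (le_of_lt hs'.2)
    · intro h
      constructor
      · intro t ht
        rcases eq_or_lt_of_le ht with rfl | ht
        · exact le_refl _
        · exact key_lsc E (hlsc ω) hJ_sub hJ_dense le_rfl ht
            (fun t' ht' hst' => (h t' ht').1)
      · have h2 : ∀ t' ∈ J, ∀ᵐ s ∂(volume.restrict (Set.Ioi (0:ℝ))),
            s < t' → E (t', ω) ≤ E (s, ω) := by
          intro t' ht'
          rw [ae_restrict_iff' measurableSet_Ioi]
          have h3 := (h t' ht').2
          rw [ae_restrict_iff' measurableSet_Ioo] at h3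
          filter_upwards [h3] with s hs hs0 hst'
          exact hs ⟨hs0, hst'⟩
        have h3 := (ae_ball_iff hJ_count).2 h2
        filter_upwards [h3, ae_restrict_mem measurableSet_Ioi] with s hsJ hs t ht
        rcases eq_or_lt_of_le ht with rfl | hlt
        · exact le_refl _
        · exact key_lsc E (hlsc ω) hJ_sub hJ_dense (le_of_lt hs) hlt
            (fun t' ht' hst' => hsJ t' ht' hst')
  refine ⟨hset, ?_⟩
  rw [hset]
  refine MeasurableSet.biInter hJ_count (fun t ht => (measurableSet_le (hEΩ t) (hEΩ 0)).inter ?_)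
  have hB : MeasurableSet {p : ℝ × Ω | E p < E (t, p.2)} :=
    measurableSet_lt hE (hE.comp (measurable_const.prodMk measurable_snd))
  have hm : Measurable fun ω =>
      (volume.restrict (Set.Ioo (0:ℝ) t)) ((fun s => (s, ω)) ⁻¹' {p : ℝ × Ω | E p < E (t, p.2)}) :=
    measurable_measure_prodMk_right hB
  have : {ω : Ω | ∀ᵐ s ∂(volume.restrict (Set.Ioo (0 : ℝ) t)), E (t, ω) ≤ E (s, ω)}
      = (fun ω => (volume.restrict (Set.Ioo (0:ℝ) t))
          ((fun s => (s, ω)) ⁻¹' {p : ℝ × Ω | E p < E (t, p.2)})) ⁻¹' {0} := by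
    ext ω
    simp only [Set.mem_setOf_eq, Set.mem_preimage, Set.mem_singleton_iff, ae_iff]
    congr! 2
    ext s
    simp [not_le]
  rw [this]
  exact hm (measurableSet_singleton 0)
end

section
/- Let (Ω, 𝓕, P) be a probability space and let E : [0, ∞) × Ω → ℝ be measurable with respect to the product of the Borel σ-algebra on [0, ∞) and 𝓕, such that for every ω ∈ Ω the map t ↦ E(t, ω) is lower semicontinuous. Then the following are equivalent: (a) there exists a Lebesgue-null set T ⊆ (0, ∞) such that for every s ∈ ((0, ∞) \ T) ∪ {0} and every t ≥ s one has P({ω : E(t, ω) ≤ E(s, ω)}) = 1; (b) P({ω : E(t, ω) ≤ E(0, ω) for all t ≥ 0, and for Lebesgue-almost every s > 0 one has E(t, ω) ≤ E(s, ω) for all t ≥ s}) = 1. -/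
open MeasureTheory Filter

/-- From a.e. membership, the (outer) measure of a set is 1 for a probability measure. -/
lemma prob_eq_one_of_ae_mem {Ω : Type*} [MeasurableSpace Ω] (P : Measure Ω)
    [IsProbabilityMeasure P] {S : Set Ω} (h : ∀ᵐ ω ∂P, ω ∈ S) : P S = 1 := by
  refine le_antisymm prob_le_one ?_
  have h0 : P {ω | ω ∉ S} = 0 := ae_iff.mp h
  calc (1 : ENNReal) = P Set.univ := measure_univ.symm
    _ = P (S ∪ Sᶜ) := by rw [Set.union_compl_self]
    _ ≤ P S + P Sᶜ := measure_union_le _ _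
    _ = P S := by
        have : P Sᶜ = 0 := h0
        rw [this, add_zero]

lemma ae_mem_of_prob_eq_one {Ω : Type*} [MeasurableSpace Ω] (P : Measure Ω)
    [IsProbabilityMeasure P] {S : Set Ω} (hS : MeasurableSet S) (h : P S = 1) :
    ∀ᵐ ω ∂P, ω ∈ S := by
  have : P Sᶜ = 0 := (prob_compl_eq_zero_iff hS).mpr h
  rw [ae_iff]
  simpa [Set.compl_def] using this

/-- Lower semicontinuity upgrades the energy inequality from rational times to all times. -/
lemma rat_to_all {Ω : Type*} (E : ℝ × Ω → ℝ) (ω : Ω)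
    (hlsc : LowerSemicontinuousOn (fun t => E (t, ω)) (Set.Ici (0 : ℝ)))
    {s : ℝ} (hs : 0 ≤ s)
    (h : ∀ q : ℚ, s ≤ (q : ℝ) → E ((q : ℝ), ω) ≤ E (s, ω)) :
    ∀ t ≥ s, E (t, ω) ≤ E (s, ω) := by
  intro t ht
  rcases eq_or_lt_of_le ht with rfl | hlt
  · exact le_rfl
  by_contra hcon
  push_neg at hcon
  have ht0 : 0 < t := lt_of_le_of_lt hs hlt
  have hl := hlsc t (le_of_lt ht0) (E (s, ω)) hcon
  rw [nhdsWithin_eq_nhds.mpr (Ici_mem_nhds ht0)] at hl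
  have h2 : ∀ᶠ u in nhds t, u ∈ Set.Ioi s := Ioi_mem_nhds hlt
  have h3 : {u : ℝ | s < u ∧ E (s, ω) < E (u, ω)} ∈ nhds t := by
    filter_upwards [hl, h2] with u hu1 hu2
    exact ⟨hu2, hu1⟩
  obtain ⟨a, b, hab, hsub⟩ := mem_nhds_iff_exists_Ioo_subset.mp h3
  obtain ⟨q, hq1, hq2⟩ := exists_rat_btwn hab.1
  have hmem : (q : ℝ) ∈ Set.Ioo a b := ⟨hq1, lt_trans hq2 hab.2⟩
  obtain ⟨hqs, hqE⟩ := hsub hmem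
  exact absurd (h q (le_of_lt hqs)) (not_le.mpr hqE)

/-- Equivalence between property (e3) and property (e3c): for a probability `P` and a
jointly measurable `E : [0, ∞) × Ω → ℝ` which is lower semicontinuous in time for each
`ω`, the existence of a Lebesgue-null set `T ⊆ (0, ∞)` with
`P {E (t, ·) ≤ E (s, ·)} = 1` for all `s ∈ ((0, ∞) \ T) ∪ {0}` and all `t ≥ s` is
equivalent to the existence of one `P`-full event on which the pathwise energy inequality
holds for `s = 0` and all `t ≥ 0` and for a.e. `s > 0` and all `t ≥ s`. -/
theorem energy_ineq_ae_iff_full_event {Ω : Type*} [MeasurableSpace Ω]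
    (P : Measure Ω) [IsProbabilityMeasure P]
    (E : ℝ × Ω → ℝ) (hE : Measurable E)
    (hlsc : ∀ ω : Ω, LowerSemicontinuousOn (fun t => E (t, ω)) (Set.Ici (0 : ℝ))) :
    (∃ T : Set ℝ, T ⊆ Set.Ioi (0 : ℝ) ∧ volume T = 0 ∧
        ∀ s ∈ (Set.Ioi (0 : ℝ) \ T) ∪ {0}, ∀ t ≥ s,
          P {ω : Ω | E (t, ω) ≤ E (s, ω)} = 1) ↔
      P {ω : Ω | (∀ t ≥ (0 : ℝ), E (t, ω) ≤ E (0, ω)) ∧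
          ∀ᵐ s ∂(volume.restrict (Set.Ioi (0 : ℝ))), ∀ t ≥ s, E (t, ω) ≤ E (s, ω)} = 1 := by
  classical
  set μ : Measure ℝ := volume.restrict (Set.Ioi (0 : ℝ)) with hμdef
  have hEc : ∀ c : ℝ, Measurable fun ω : Ω => E (c, ω) := fun c =>
    hE.comp (measurable_const.prodMk measurable_id)
  set A : Set (ℝ × Ω) :=
    {p : ℝ × Ω | 0 < p.1 ∧ ∃ q : ℚ, p.1 ≤ (q : ℝ) ∧ E p < E ((q : ℝ), p.2)} with hAdef
  have hA : MeasurableSet A := by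
    have hrw : A = {p : ℝ × Ω | 0 < p.1} ∩
        ⋃ q : ℚ, ({p : ℝ × Ω | p.1 ≤ (q : ℝ)} ∩ {p : ℝ × Ω | E p < E ((q : ℝ), p.2)}) := by
      ext p
      simp only [hAdef, Set.mem_setOf_eq, Set.mem_inter_iff, Set.mem_iUnion]
    rw [hrw]
    refine (measurableSet_lt measurable_const measurable_fst).inter ?_
    refine MeasurableSet.iUnion fun q => ?_
    exact (measurableSet_le measurable_fst measurable_const).inter
      (measurableSet_lt hE (hE.comp (measurable_const.prodMk measurable_snd)))
  have hswap : MeasurableSet (Prod.swap ⁻¹' A : Set (Ω × ℝ)) := hA.preimage measurable_swap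
  have hps : P.prod μ (Prod.swap ⁻¹' A) = μ.prod P A := by
    rw [← Measure.prod_swap, Measure.map_apply measurable_swap hswap]
    congr 1
  have hslice_eq : ∀ ω : Ω, Prod.mk ω ⁻¹' (Prod.swap ⁻¹' A) = {s : ℝ | (s, ω) ∈ A} := by
    intro ω; ext s; simp [Set.mem_preimage]
  constructor
  · rintro ⟨T, hTsub, hTnull, hT⟩
    have hμT : μ T = 0 :=
      le_antisymm ((Measure.restrict_apply_le _ _).trans hTnull.le) (zero_le)
    have hTae : ∀ᵐ s ∂μ, s ∈ Set.Ioi (0 : ℝ) ∧ s ∉ T := by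
      have h1 : ∀ᵐ s ∂μ, s ∈ Set.Ioi (0 : ℝ) := ae_restrict_mem measurableSet_Ioi
      have h2 : ∀ᵐ s ∂μ, s ∉ T := by
        rw [ae_iff]
        simpa [not_not] using hμT
      exact h1.and h2
    have hslice : ∀ᵐ s ∂μ, P (Prod.mk s ⁻¹' A) = 0 := by
      filter_upwards [hTae] with s hs
      have hsT : s ∈ (Set.Ioi (0 : ℝ) \ T) ∪ {0} := Or.inl ⟨hs.1, hs.2⟩
      have hall : ∀ᵐ ω ∂P, ∀ q : ℚ, s ≤ (q : ℝ) → E ((q : ℝ), ω) ≤ E (s, ω) := by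
        rw [ae_all_iff]
        intro q
        by_cases hq : s ≤ (q : ℝ)
        · have h1 := hT s hsT (q : ℝ) hq
          have hms : MeasurableSet {ω : Ω | E ((q : ℝ), ω) ≤ E (s, ω)} :=
            measurableSet_le (hEc _) (hEc _)
          filter_upwards [ae_mem_of_prob_eq_one P hms h1] with ω hω _
          exact hω
        · filter_upwards with ω hq'
          exact absurd hq' hq
      refine measure_mono_null ?_ (ae_iff.mp hall)
      intro ω hω
      obtain ⟨-, q, hq1, hq2⟩ := hω
      simp only [Set.mem_setOf_eq, not_forall]
      exact ⟨q, hq1, not_le.mpr hq2⟩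
    have hprod : μ.prod P A = 0 := by
      rw [Measure.measure_prod_null hA]
      filter_upwards [hslice] with s h
      simpa using h
    have hprod2 : P.prod μ (Prod.swap ⁻¹' A) = 0 := by rw [hps]; exact hprod
    have hωslice : ∀ᵐ ω ∂P, μ {s : ℝ | (s, ω) ∈ A} = 0 := by
      filter_upwards [Measure.measure_ae_null_of_prod_null hprod2] with ω h
      rw [← hslice_eq ω]
      simpa using h
    have hF0 : ∀ᵐ ω ∂P, ∀ q : ℚ, (0 : ℝ) ≤ (q : ℝ) → E ((q : ℝ), ω) ≤ E ((0 : ℝ), ω) := by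
      rw [ae_all_iff]
      intro q
      by_cases hq : (0 : ℝ) ≤ (q : ℝ)
      · have h1 := hT 0 (Or.inr rfl) (q : ℝ) hq
        have hms : MeasurableSet {ω : Ω | E ((q : ℝ), ω) ≤ E ((0 : ℝ), ω)} :=
          measurableSet_le (hEc _) (hEc _)
        filter_upwards [ae_mem_of_prob_eq_one P hms h1] with ω hω _
        exact hω
      · filter_upwards with ω hq'
        exact absurd hq' hq
    apply prob_eq_one_of_ae_mem
    filter_upwards [hF0, hωslice] with ω h0 h1
    refine ⟨rat_to_all E ω (hlsc ω) le_rfl h0, ?_⟩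
    have h2 : ∀ᵐ s ∂μ, (s, ω) ∉ A := by
      rw [ae_iff]
      simpa [not_not] using h1
    filter_upwards [h2, ae_restrict_mem measurableSet_Ioi] with s hsA hs0
    have hq : ∀ q : ℚ, s ≤ (q : ℝ) → E ((q : ℝ), ω) ≤ E (s, ω) := by
      intro q hq'
      by_contra hc
      push_neg at hc
      exact hsA ⟨hs0, q, hq', hc⟩
    exact rat_to_all E ω (hlsc ω) (le_of_lt hs0) hq
  · intro h
    set G1 : Set Ω := {ω : Ω | ∀ q : ℚ, (0 : ℝ) ≤ (q : ℝ) → E ((q : ℝ), ω) ≤ E ((0 : ℝ), ω)}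
      with hG1def
    set G2 : Set Ω := {ω : Ω | μ (Prod.mk ω ⁻¹' (Prod.swap ⁻¹' A)) = 0} with hG2def
    have hG1m : MeasurableSet G1 := by
      have : G1 = ⋂ q : ℚ, {ω : Ω | (0 : ℝ) ≤ (q : ℝ) → E ((q : ℝ), ω) ≤ E ((0 : ℝ), ω)} := by
        ext ω; simp [hG1def]
      rw [this]
      refine MeasurableSet.iInter fun q => ?_
      by_cases hq : (0 : ℝ) ≤ (q : ℝ)
      · simpa [hq] using measurableSet_le (hEc (q : ℝ)) (hEc 0)
      · simp [hq]
    have hG2m : MeasurableSet G2 := by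
      have hmeas : Measurable fun ω : Ω => μ (Prod.mk ω ⁻¹' (Prod.swap ⁻¹' A)) :=
        measurable_measure_prodMk_left hswap
      exact hmeas (measurableSet_singleton 0)
    have hsub : {ω : Ω | (∀ t ≥ (0 : ℝ), E (t, ω) ≤ E (0, ω)) ∧
        ∀ᵐ s ∂μ, ∀ t ≥ s, E (t, ω) ≤ E (s, ω)} ⊆ G1 ∩ G2 := by
      rintro ω ⟨hω1, hω2⟩
      constructor
      · intro q hq
        exact hω1 (q : ℝ) hq
      · show μ (Prod.mk ω ⁻¹' (Prod.swap ⁻¹' A)) = 0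
        rw [hslice_eq ω]
        have : ∀ᵐ s ∂μ, (s, ω) ∉ A := by
          filter_upwards [hω2] with s hs
          rintro ⟨-, q, hq1, hq2⟩
          exact absurd (hs (q : ℝ) hq1) (not_le.mpr hq2)
        simpa [not_not] using ae_iff.mp this
    have hG : P (G1 ∩ G2) = 1 :=
      le_antisymm prob_le_one (h ▸ measure_mono hsub)
    have hae := ae_mem_of_prob_eq_one P (hG1m.inter hG2m) hG
    have hprod2 : P.prod μ (Prod.swap ⁻¹' A) = 0 := by
      rw [Measure.measure_prod_null hswap]
      filter_upwards [hae] with ω hω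
      exact hω.2
    have hprod : μ.prod P A = 0 := by rw [← hps]; exact hprod2
    have hsae : ∀ᵐ s ∂μ, P (Prod.mk s ⁻¹' A) = 0 := by
      filter_upwards [Measure.measure_ae_null_of_prod_null hprod] with s h'
      simpa using h'
    have hfmeas : Measurable fun s : ℝ => P (Prod.mk s ⁻¹' A) :=
      measurable_measure_prodMk_left hA
    refine ⟨{s : ℝ | P (Prod.mk s ⁻¹' A) ≠ 0} ∩ Set.Ioi 0, Set.inter_subset_right, ?_, ?_⟩
    · have h0 : μ {s : ℝ | P (Prod.mk s ⁻¹' A) ≠ 0} = 0 := by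
        rw [ae_iff] at hsae
        simpa using hsae
      have hmeas : MeasurableSet {s : ℝ | P (Prod.mk s ⁻¹' A) ≠ 0} := by
        have := (hfmeas (measurableSet_singleton 0)).compl
        simpa [Set.compl_def] using this
      rw [hμdef, Measure.restrict_apply hmeas] at h0
      exact h0
    · rintro s (⟨hs1, hs2⟩ | hs0)
      · intro t ht
        have hfs : P (Prod.mk s ⁻¹' A) = 0 := by
          by_contra hc
          exact hs2 ⟨hc, hs1⟩
        have hnA : ∀ᵐ ω ∂P, (s, ω) ∉ A := by
          rw [ae_iff]
          simp only [not_not]; exact hfs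
        apply prob_eq_one_of_ae_mem
        filter_upwards [hnA] with ω hω
        have hq : ∀ q : ℚ, s ≤ (q : ℝ) → E ((q : ℝ), ω) ≤ E (s, ω) := by
          intro q hq'
          by_contra hc
          push_neg at hc
          exact hω ⟨hs1, q, hq', hc⟩
        exact rat_to_all E ω (hlsc ω) (le_of_lt hs1) hq t ht
      · have hs : s = 0 := hs0
        subst hs
        intro t ht
        refine le_antisymm prob_le_one ?_
        rw [← h]
        apply measure_mono
        rintro ω ⟨hω1, -⟩
        exact hω1 t ht
end
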